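/- Let ℒ = {l₁, l₂, …, l_s} be a set of s nonnegative integers. If 𝒜 is an ℒ-intersecting family of pairwise distinct subsets of [n], then |𝒜| ≤ C(n, s) + C(n, s−1) + … + C(n, 0). -/

import Mathlib

open Finset Submodule

variable {n : ℕ}

/-- monomial function -/
noncomputable def chiF (B : Finset (Fin n)) : Finset (Fin n) → ℝ :=
  fun x => if B ⊆ x then 1 else 0

noncomputable def spanSet (n d : ℕ) : Set (Finset (Fin n) → ℝ) :=
  chiF '' {B | B.card ≤ d}

lemma mul_mem_span (a : Finset (Fin n)) (c : ℝ) (d : ℕ) (h : Finset (Fin n) → ℝ)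
    (hh : h ∈ span ℝ (spanSet n d)) :
    (fun x => (((x ∩ a).card : ℝ) - c) * h x) ∈ span ℝ (spanSet n (d + 1)) := by
  induction hh using span_induction with
  | mem g hg =>
    obtain ⟨B, hB, rfl⟩ := hg
    have key : (fun x => (((x ∩ a).card : ℝ) - c) * chiF B x)
        = (∑ i ∈ a, chiF (insert i B)) - c • chiF B := by
      funext x
      simp only [Finset.sum_apply, Pi.sub_apply, Pi.smul_apply, smul_eq_mul, chiF]
      by_cases hBx : B ⊆ x
      · have : ∀ i, insert i B ⊆ x ↔ i ∈ x := by
          intro i; constructor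
          · intro h; exact h (mem_insert_self i B)
          · intro h; exact insert_subset h hBx
        simp only [hBx, if_true, mul_one, this]
        have : (∑ i ∈ a, if i ∈ x then (1:ℝ) else 0) = ((x ∩ a).card : ℝ) := by
          rw [Finset.sum_boole, Finset.filter_mem_eq_inter, Finset.inter_comm]
        rw [this]
      · have : ∀ i ∈ a, ¬ insert i B ⊆ x := by
          intro i _ h
          exact hBx (Finset.Subset.trans (Finset.subset_insert i B) h)
        rw [Finset.sum_congr rfl (fun i hi => if_neg (this i hi))]
        simp [hBx]
    have hB' : B.card ≤ d := hB
    rw [key]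
    refine sub_mem (sum_mem fun i _ => subset_span ?_) (smul_mem _ _ (subset_span ?_))
    · exact ⟨insert i B, le_trans (Finset.card_insert_le i B) (by omega), rfl⟩
    · exact ⟨B, (by omega : B.card ≤ d + 1), rfl⟩
  | zero =>
    have : (fun x => (((x ∩ a).card : ℝ) - c) * (0 : Finset (Fin n) → ℝ) x) = 0 := by
      funext x; simp
    rw [this]; exact zero_mem _
  | add g₁ g₂ _ _ ih₁ ih₂ =>
    have : (fun x => (((x ∩ a).card : ℝ) - c) * (g₁ + g₂) x)
        = (fun x => (((x ∩ a).card : ℝ) - c) * g₁ x)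
          + (fun x => (((x ∩ a).card : ℝ) - c) * g₂ x) := by
      funext x; simp [mul_add]
    rw [this]; exact add_mem ih₁ ih₂
  | smul r g _ ih =>
    have : (fun x => (((x ∩ a).card : ℝ) - c) * (r • g) x)
        = r • (fun x => (((x ∩ a).card : ℝ) - c) * g x) := by
      funext x; simp; ring
    rw [this]; exact smul_mem _ _ ih

lemma spanSet_mono {d d' : ℕ} (h : d ≤ d') : spanSet n d ⊆ spanSet n d' :=
  Set.image_mono (fun B hB => le_trans hB h)

lemma prod_mem_span (a : Finset (Fin n)) (L' : Finset ℕ) :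
    (fun x => ∏ l ∈ L', (((x ∩ a).card : ℝ) - l)) ∈ span ℝ (spanSet n L'.card) := by
  induction L' using Finset.induction with
  | empty =>
    have : (fun x : Finset (Fin n) => ∏ l ∈ (∅ : Finset ℕ), (((x ∩ a).card : ℝ) - l))
        = chiF (∅ : Finset (Fin n)) := by
      funext x; simp [chiF]
    rw [this]
    exact subset_span ⟨∅, by simp, rfl⟩
  | @insert l L' hl ih =>
    have key : (fun x => ∏ m ∈ insert l L', (((x ∩ a).card : ℝ) - m))
        = fun x => (((x ∩ a).card : ℝ) - l) * ∏ m ∈ L', (((x ∩ a).card : ℝ) - m) := by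
      funext x; rw [Finset.prod_insert hl]
    rw [key, Finset.card_insert_of_notMem hl]
    exact mul_mem_span a l L'.card _ ih

/-- **Theorem 1.3 (Frankl–Wilson).** Let `ℒ` be a set of `s` nonnegative integers.
If `𝒜` is an `ℒ`-intersecting family of (pairwise distinct) subsets of `[n]`, then
`|𝒜| ≤ C(n, s) + C(n, s-1) + ⋯ + C(n, 0)`. -/
theorem stmt_15 (n s : ℕ) (L : Finset ℕ) (hL : L.card = s)
    (A : Finset (Finset (Fin n)))
    (hAL : ∀ a ∈ A, ∀ b ∈ A, a ≠ b → (a ∩ b).card ∈ L) :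
    A.card ≤ ∑ j ∈ Finset.range (s + 1), n.choose j := by
  classical
  -- the functions
  set f : Finset (Fin n) → (Finset (Fin n) → ℝ) :=
    fun a => fun x => ∏ l ∈ L.filter (· < a.card), (((x ∩ a).card : ℝ) - l) with hf
  -- diagonal nonzero
  have hdiag : ∀ a : Finset (Fin n), f a a ≠ 0 := by
    intro a
    simp only [hf]
    apply Finset.prod_ne_zero_iff.mpr
    intro l hl
    rw [Finset.mem_filter] at hl
    rw [Finset.inter_self]
    have hlt : (l : ℝ) < (a.card : ℝ) := by exact_mod_cast hl.2
    intro h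
    have := sub_eq_zero.mp h
    linarith
  -- off-diagonal zero
  have hoff : ∀ a ∈ A, ∀ b ∈ A, a ≠ b → a.card ≤ b.card → f b a = 0 := by
    intro a ha b hb hab hcard
    have hmem : (a ∩ b).card ∈ L := hAL a ha b hb hab
    have hab1 : (a ∩ b).card ≤ a.card := Finset.card_le_card Finset.inter_subset_left
    have hlt : (a ∩ b).card < b.card := by
      rcases lt_or_eq_of_le (le_trans hab1 hcard) with h | h
      · exact h
      · exfalso
        have h1 : a ∩ b = a := Finset.eq_of_subset_of_card_le Finset.inter_subset_left (by omega)
        have h2 : a ⊆ b := h1 ▸ Finset.inter_subset_right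
        exact hab (Finset.eq_of_subset_of_card_le h2 (by omega))
    simp only [hf]
    apply Finset.prod_eq_zero (i := (a ∩ b).card)
    · rw [Finset.mem_filter]; exact ⟨hmem, hlt⟩
    · simp
  -- linear independence
  have li : LinearIndependent ℝ (fun a : ↥A => f ↑a) := by
    rw [linearIndependent_iff']
    intro S g hsum
    by_contra hcon
    push_neg at hcon
    obtain ⟨i₀, hi₀S, hi₀⟩ := hcon
    have hne : (S.filter (fun i => g i ≠ 0)).Nonempty := ⟨i₀, Finset.mem_filter.mpr ⟨hi₀S, hi₀⟩⟩
    obtain ⟨a, haS, hamin⟩ := Finset.exists_min_image (S.filter (fun i => g i ≠ 0)) (fun i => (↑i : Finset (Fin n)).card) hne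
    rw [Finset.mem_filter] at haS
    have heval := congrFun hsum (↑a : Finset (Fin n))
    simp only [Finset.sum_apply, Pi.smul_apply, smul_eq_mul, Pi.zero_apply] at heval
    have : ∀ i ∈ S, i ≠ a → g i * f ↑i ↑a = 0 := by
      intro i hiS hia
      by_cases hgi : g i = 0
      · rw [hgi, zero_mul]
      · have hi' : i ∈ S.filter (fun i => g i ≠ 0) := Finset.mem_filter.mpr ⟨hiS, hgi⟩
        have hle := hamin i hi'
        have hne' : (↑a : Finset (Fin n)) ≠ ↑i := fun h => hia (Subtype.ext h.symm)
        rw [hoff ↑a a.2 ↑i i.2 hne' hle, mul_zero]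
    rw [Finset.sum_eq_single a (fun i hiS hia => this i hiS hia)
      (fun h => absurd haS.1 h)] at heval
    exact haS.2 (by
      rcases mul_eq_zero.mp heval with h | h
      · exact h
      · exact absurd h (hdiag ↑a))
  -- each f a lies in the span
  have hmem : ∀ a ∈ A, f a ∈ span ℝ (spanSet n s) := by
    intro a _
    have h1 := prod_mem_span a (L.filter (· < a.card))
    have h2 : (L.filter (· < a.card)).card ≤ s := hL ▸ Finset.card_filter_le L _
    exact span_mono (spanSet_mono h2) h1
  -- finish via dimension count
  set T : Finset (Finset (Fin n) → ℝ) :=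
    (Finset.univ.filter (fun B : Finset (Fin n) => B.card ≤ s)).image chiF with hT
  have hTspan : spanSet n s = (T : Set (Finset (Fin n) → ℝ)) := by
    ext g
    simp only [spanSet, Set.mem_image, Set.mem_setOf_eq, hT, Finset.coe_image,
      Finset.coe_filter, Finset.mem_univ, true_and]
  set W := span ℝ (spanSet n s) with hW
  have hfin : FiniteDimensional ℝ W := by
    rw [hW, hTspan]
    exact FiniteDimensional.span_finset ℝ T
  let F : ↥A → W := fun a => ⟨f ↑a, hmem ↑a a.2⟩
  have liF : LinearIndependent ℝ F := by
    apply LinearIndependent.of_comp W.subtype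
    convert li
    rfl
  have h1 : A.card ≤ Module.finrank ℝ W := by
    have := liF.fintype_card_le_finrank
    simpa using this
  have h2 : Module.finrank ℝ W ≤ T.card := by
    rw [hW, hTspan]
    exact finrank_span_finset_le_card T
  have h3 : T.card ≤ (Finset.univ.filter (fun B : Finset (Fin n) => B.card ≤ s)).card :=
    Finset.card_image_le
  have h4 : (Finset.univ.filter (fun B : Finset (Fin n) => B.card ≤ s)).card
      = ∑ j ∈ Finset.range (s + 1), n.choose j := by
    have : Finset.univ.filter (fun B : Finset (Fin n) => B.card ≤ s)
        = (Finset.range (s + 1)).biUnion (fun j => Finset.univ.powersetCard j) := by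
      ext B
      simp [Finset.mem_powersetCard, Nat.lt_succ_iff]
    rw [this, Finset.card_biUnion]
    · apply Finset.sum_congr rfl
      intro j _
      rw [Finset.card_powersetCard, Finset.card_univ, Fintype.card_fin]
    · intro i _ j _ hij
      apply Finset.disjoint_left.mpr
      intro B hB hB'
      rw [Finset.mem_powersetCard] at hB hB'
      exact hij (hB.2 ▸ hB'.2 ▸ rfl)
  omega
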